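/- For any positive integer j and any graph G, the upper j-annihilation number a_j(G) is at most the weak upper j-annihilation number a_j′(G) = max{k | Σ_{i=1}^k d_i − k(j−1)/2 ≤ m(G)}. -/

import Mathlib

open Finset

namespace DSI

variable {V : Type*} (G : SimpleGraph V) [Fintype V] [DecidableEq V] [DecidableRel G.Adj]

/-- The degree sequence of `G`, sorted in non-decreasing order. -/
def dseq : List ℕ := (Finset.univ.val.map (fun v => G.degree v)).sort (· ≤ ·)

/-- The sum of the `k` smallest degrees, `Σ_{i=1}^k d_i`. -/
def sumSmallest (k : ℕ) : ℕ := ((dseq G).take k).sum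

/-- The sum of the `k` largest degrees, `Σ_{i=1}^k d_{n-i+1}`. -/
def sumLargest (k : ℕ) : ℕ := ((dseq G).reverse.take k).sum

/-- The number of edges `m(G)`. -/
def esize : ℕ := G.edgeFinset.card

/-- `m[S]`: the number of edges of the subgraph induced by `S`. -/
def mOn (S : Finset V) : ℕ := (S.sym2.filter (fun e => e ∈ G.edgeSet)).card

/-- A set `I` is `j`-independent if every vertex of `I` has fewer than `j` neighbours in `I`,
i.e. the induced subgraph has maximum degree `< j`. -/
def JIndep (j : ℕ) (I : Finset V) : Prop := ∀ v ∈ I, (I.filter (G.Adj v)).card < j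

/-- The `j`-independence number `α_j(G)`. -/
noncomputable def alphaJ (j : ℕ) : ℕ := sSup {k | ∃ I : Finset V, JIndep G j I ∧ I.card = k}

/-- The family `F` of maximum `j`-independent sets. -/
noncomputable def maxJIndep (j : ℕ) : Set (Finset V) :=
  {S | JIndep G j S ∧ S.card = alphaJ G j}

/-- `max_{S ∈ F} (m[V−S] − m[S])`. -/
noncomputable def fU (j : ℕ) : ℤ :=
  sSup ((fun S : Finset V => (mOn G Sᶜ : ℤ) - (mOn G S : ℤ)) '' maxJIndep G j)

/-- `min_{S ∈ F} (m[V−S] − m[S])`. -/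
noncomputable def fL (j : ℕ) : ℤ :=
  sInf ((fun S : Finset V => (mOn G Sᶜ : ℤ) - (mOn G S : ℤ)) '' maxJIndep G j)

/-- The upper `j`-annihilation number `a_j(G)`. -/
noncomputable def aJ (j : ℕ) : ℕ :=
  sSup {k | k ≤ Fintype.card V ∧ (sumSmallest G k : ℤ) + fU G j ≤ (esize G : ℤ)}

/-- The lower `j`-annihilation number `c_j(G)`. -/
noncomputable def cJ (j : ℕ) : ℕ :=
  sInf {k | k ≤ Fintype.card V ∧ (esize G : ℤ) ≤ (sumLargest G k : ℤ) + fL G j}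

/-- The annihilation number `a(G)`. -/
noncomputable def annihilation : ℕ :=
  sSup {k | k ≤ Fintype.card V ∧ sumSmallest G k ≤ esize G}

/-- An independent set. -/
def IndepSet (I : Finset V) : Prop := ∀ v ∈ I, ∀ w ∈ I, ¬ G.Adj v w

/-- The independence number `α(G)`. -/
noncomputable def alpha : ℕ := sSup {k | ∃ I : Finset V, IndepSet G I ∧ I.card = k}

end DSI
/-- The weak upper `j`-annihilation number
`a_j′(G) = max { k | Σ_{i=1}^k d_i - k(j-1)/2 ≤ m(G) }`. -/
noncomputable def DSI.aJweak {V : Type*} (G : SimpleGraph V) [Fintype V]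
    [DecidableEq V] [DecidableRel G.Adj] (j : ℕ) : ℕ :=
  sSup {k | k ≤ Fintype.card V ∧
    (DSI.sumSmallest G k : ℚ) - (k : ℚ) * ((j : ℚ) - 1) / 2 ≤ (DSI.esize G : ℚ)}

namespace AJProof
open DSI

lemma take_sorted_sum_le {l t : List ℕ} (hl : l.Pairwise (· ≤ ·)) (ht : t.Pairwise (· ≤ ·))
    (hle : (t : Multiset ℕ) ≤ (l : Multiset ℕ)) :
    (l.take t.length).sum ≤ t.sum := by
  have hlen : t.length ≤ l.length := by simpa using Multiset.card_le_card hle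
  have hpt : ∀ i (hi : i < t.length), l.get ⟨i, lt_of_lt_of_le hi hlen⟩ ≤ t.get ⟨i, hi⟩ := by
    intro i hi
    by_contra hcon
    push_neg at hcon
    set x := t.get ⟨i, hi⟩ with hx
    have h1 : i + 1 ≤ t.countP (fun a => decide (a ≤ x)) := by
      have : (t.take (i+1)).countP (fun a => decide (a ≤ x)) = i + 1 := by
        rw [List.countP_eq_length.2, List.length_take, min_eq_left (by omega)]
        intro a ha
        obtain ⟨j, hj, rfl⟩ := List.mem_iff_getElem.1 ha
        rw [List.getElem_take]
        simp only [decide_eq_true_eq, hx]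
        have hj' : j < t.length := by
          have := List.length_take (i := i+1) (l := t)
          omega
        exact ht.rel_get_of_le (a := ⟨j, hj'⟩) (b := ⟨i, hi⟩)
          (by simp; rw [List.length_take] at hj; omega)
      calc i + 1 = (t.take (i+1)).countP (fun a => decide (a ≤ x)) := this.symm
        _ ≤ t.countP _ := (List.take_sublist _ _).countP_le
    have h2 : l.countP (fun a => decide (a ≤ x)) ≤ i := by
      have hsplit : l = l.take i ++ l.drop i := (List.take_append_drop i l).symm
      rw [hsplit, List.countP_append]
      have hA : (l.take i).countP (fun a => decide (a ≤ x)) ≤ i := by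
        calc _ ≤ (l.take i).length := List.countP_le_length
          _ ≤ i := by rw [List.length_take]; omega
      have hB : (l.drop i).countP (fun a => decide (a ≤ x)) = 0 := by
        rw [List.countP_eq_zero]
        intro a ha
        obtain ⟨j, hj, rfl⟩ := List.mem_iff_getElem.1 ha
        rw [List.getElem_drop]
        simp only [decide_eq_true_eq, not_le]
        calc x < l.get ⟨i, lt_of_lt_of_le hi hlen⟩ := hcon
          _ ≤ _ := by
            have hj' : i + j < l.length := by rw [List.length_drop] at hj; omega
            exact hl.rel_get_of_le (a := ⟨i, _⟩) (b := ⟨i + j, hj'⟩) (by simp)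
      omega
    have := Multiset.countP_le_of_le (fun a => a ≤ x) hle
    rw [Multiset.coe_countP, Multiset.coe_countP] at this
    omega
  have hfa : List.Forall₂ (· ≤ ·) (l.take t.length) t := by
    rw [List.forall₂_iff_get]
    constructor
    · rw [List.length_take]; omega
    · intro i h1 h2
      have : (l.take t.length).get ⟨i, h1⟩ = l.get ⟨i, lt_of_lt_of_le h2 hlen⟩ := by
        simp [List.get_eq_getElem, List.getElem_take]
      rw [this]
      exact hpt i h2
  exact hfa.sum_le_sum

variable {V : Type*} (G : SimpleGraph V) [Fintype V] [DecidableEq V] [DecidableRel G.Adj]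

lemma mOn_eq (S : Finset V) :
    mOn G S = (G.edgeFinset.filter fun e => ∀ a ∈ e, a ∈ S).card := by
  apply congrArg Finset.card
  ext e
  simp [mOn, Finset.mem_sym2_iff, SimpleGraph.mem_edgeFinset, and_comm]

lemma degree_eq_card_filter (v : V) :
    G.degree v = (G.edgeFinset.filter fun e => v ∈ e).card := by
  rw [← SimpleGraph.card_incidenceFinset_eq_degree, SimpleGraph.incidenceFinset_eq_filter]

lemma key_identity (S : Finset V) :
    esize G + mOn G S = (∑ v ∈ S, G.degree v) + mOn G Sᶜ := by
  have hsum : ∑ v ∈ S, G.degree v = ∑ e ∈ G.edgeFinset, (S.filter (· ∈ e)).card := by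
    simp only [degree_eq_card_filter, Finset.card_filter]
    rw [Finset.sum_comm]
  rw [hsum, mOn_eq, mOn_eq, Finset.card_filter, Finset.card_filter, esize,
    Finset.card_eq_sum_ones, ← Finset.sum_add_distrib, ← Finset.sum_add_distrib]
  apply Finset.sum_congr rfl
  intro e he
  induction e with
  | h a b =>
    rw [SimpleGraph.mem_edgeFinset, SimpleGraph.mem_edgeSet] at he
    have hab : a ≠ b := he.ne
    have hcard : (S.filter (· ∈ s(a,b))).card
        = (if a ∈ S then 1 else 0) + (if b ∈ S then 1 else 0) := by
      simp only [Sym2.mem_iff]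
      rw [Finset.filter_or, Finset.card_union_of_disjoint]
      · simp only [Finset.filter_eq']
        by_cases ha : a ∈ S <;> by_cases hb : b ∈ S <;> simp [ha, hb]
      · simp only [Finset.filter_eq']
        by_cases ha : a ∈ S <;> by_cases hb : b ∈ S <;>
          simp [ha, hb, Finset.disjoint_singleton, hab, hab.symm]
    rw [hcard]
    simp only [Sym2.ball, Finset.mem_compl]
    by_cases ha : a ∈ S <;> by_cases hb : b ∈ S <;> simp [ha, hb]

lemma handshake_mOn (S : Finset V) :
    2 * mOn G S = ∑ v ∈ S, (S.filter (G.Adj v)).card := by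
  classical
  let G' : SimpleGraph V :=
    { Adj := fun a b => G.Adj a b ∧ a ∈ S ∧ b ∈ S
      symm := by constructor; intro a b ⟨h, ha, hb⟩; exact ⟨h.symm, hb, ha⟩
      loopless := by constructor; intro a ⟨h, _⟩; exact G.irrefl h }
  have hdec : DecidableRel G'.Adj := fun a b => instDecidableAnd
  have hedge : G'.edgeFinset = G.edgeFinset.filter fun e => ∀ a ∈ e, a ∈ S := by
    ext e
    induction e with
    | h a b =>
      simp only [SimpleGraph.mem_edgeFinset, Finset.mem_filter, SimpleGraph.mem_edgeSet,
        Sym2.ball]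
      exact Iff.rfl
  have hdeg : ∀ v ∈ S, G'.degree v = (S.filter (G.Adj v)).card := by
    intro v hv
    rw [← SimpleGraph.card_neighborFinset_eq_degree]
    apply congrArg Finset.card
    ext w
    simp only [SimpleGraph.mem_neighborFinset, Finset.mem_filter]
    constructor
    · rintro ⟨h, _, hw⟩; exact ⟨hw, h⟩
    · rintro ⟨hw, h⟩; exact ⟨h, hv, hw⟩
  have hdeg0 : ∀ v ∉ S, G'.degree v = 0 := by
    intro v hv
    rw [← SimpleGraph.card_neighborFinset_eq_degree, Finset.card_eq_zero]
    ext w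
    simp only [SimpleGraph.mem_neighborFinset, Finset.notMem_empty, iff_false]
    rintro ⟨_, hv', _⟩; exact hv hv'
  have := SimpleGraph.sum_degrees_eq_twice_card_edges G'
  rw [← Finset.sum_subset (Finset.subset_univ S) (fun v _ hv => hdeg0 v hv)] at this
  rw [mOn_eq, ← hedge, ← this]
  exact Finset.sum_congr rfl hdeg

lemma two_mOn_le {j : ℕ} (hj : 1 ≤ j) (S : Finset V) (hS : JIndep G j S) :
    2 * mOn G S ≤ S.card * (j - 1) := by
  rw [handshake_mOn]
  calc ∑ v ∈ S, (S.filter (G.Adj v)).card ≤ ∑ _v ∈ S, (j - 1) :=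
        Finset.sum_le_sum fun v hv => Nat.le_sub_one_of_lt (hS v hv)
    _ = S.card * (j - 1) := by rw [Finset.sum_const, smul_eq_mul]

lemma sumSmallest_card_le (S : Finset V) :
    sumSmallest G S.card ≤ ∑ v ∈ S, G.degree v := by
  classical
  set t : List ℕ := (S.val.map (fun v => G.degree v)).sort (· ≤ ·) with ht
  have htlen : t.length = S.card := by
    rw [ht, Multiset.length_sort, Multiset.card_map]; rfl
  have htsum : t.sum = ∑ v ∈ S, G.degree v := by
    rw [← Multiset.sum_coe, Multiset.sort_eq]; rfl
  have hle : (t : Multiset ℕ) ≤ ((dseq G : List ℕ) : Multiset ℕ) := by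
    rw [ht, Multiset.sort_eq, dseq, Multiset.sort_eq]
    exact Multiset.map_le_map (Finset.val_le_iff.2 (Finset.subset_univ S))
  have := take_sorted_sum_le (l := dseq G) (t := t)
    (Multiset.pairwise_sort _ _) (Multiset.pairwise_sort _ _) hle
  rw [htlen, htsum] at this
  exact this

lemma exists_maxJIndep (j : ℕ) : ∃ S : Finset V, S ∈ maxJIndep G j := by
  have hne : {k | ∃ I : Finset V, JIndep G j I ∧ I.card = k}.Nonempty :=
    ⟨0, ∅, fun v hv => absurd hv (Finset.notMem_empty v), Finset.card_empty⟩
  have hbdd : BddAbove {k | ∃ I : Finset V, JIndep G j I ∧ I.card = k} :=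
    ⟨Fintype.card V, fun k ⟨I, _, hI⟩ => hI ▸ Finset.card_le_univ I⟩
  obtain ⟨I, hI, hcard⟩ := Nat.sSup_mem hne hbdd
  exact ⟨I, hI, hcard⟩

lemma alphaJ_mem_aJset (j : ℕ) :
    alphaJ G j ∈ {k | k ≤ Fintype.card V ∧ (sumSmallest G k : ℤ) + fU G j ≤ (esize G : ℤ)} := by
  obtain ⟨S, hS⟩ := exists_maxJIndep G j
  constructor
  · rw [← hS.2]; exact Finset.card_le_univ S
  · have himg : ((fun S : Finset V => (mOn G Sᶜ : ℤ) - (mOn G S : ℤ)) '' maxJIndep G j).Nonempty :=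
      ⟨_, Set.mem_image_of_mem _ hS⟩
    have hbound : fU G j ≤ (esize G : ℤ) - (sumSmallest G (alphaJ G j) : ℤ) := by
      apply csSup_le himg
      rintro x ⟨T, hT, rfl⟩
      show (mOn G Tᶜ : ℤ) - (mOn G T : ℤ) ≤ _
      have hkey := key_identity G T
      have hdeg := sumSmallest_card_le G T
      rw [hT.2] at hdeg
      have : (esize G : ℤ) + (mOn G T : ℤ)
          = ((∑ v ∈ T, G.degree v : ℕ) : ℤ) + (mOn G Tᶜ : ℤ) := by exact_mod_cast hkey
      have hdeg' : ((sumSmallest G (alphaJ G j) : ℕ) : ℤ) ≤ ((∑ v ∈ T, G.degree v : ℕ) : ℤ) := by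
        exact_mod_cast hdeg
      linarith
    linarith

lemma fU_lower {j : ℕ} (hj : 1 ≤ j) :
    -(((alphaJ G j) * (j - 1) : ℕ) : ℤ) ≤ 2 * fU G j := by
  obtain ⟨S, hS⟩ := exists_maxJIndep G j
  have hmem : (mOn G Sᶜ : ℤ) - (mOn G S : ℤ)
      ∈ (fun S : Finset V => (mOn G Sᶜ : ℤ) - (mOn G S : ℤ)) '' maxJIndep G j :=
    Set.mem_image_of_mem _ hS
  have hbdd : BddAbove ((fun S : Finset V => (mOn G Sᶜ : ℤ) - (mOn G S : ℤ)) '' maxJIndep G j) :=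
    Set.Finite.bddAbove ((Set.toFinite _).image _)
  have h1 : (mOn G Sᶜ : ℤ) - (mOn G S : ℤ) ≤ fU G j := le_csSup hbdd hmem
  have h2 : 2 * mOn G S ≤ S.card * (j - 1) := two_mOn_le G hj S hS.1
  have h2' : (2 * mOn G S : ℤ) ≤ ((S.card * (j - 1) : ℕ) : ℤ) := by exact_mod_cast h2
  rw [hS.2] at h2'
  have h0 : (0 : ℤ) ≤ (mOn G Sᶜ : ℤ) := Int.natCast_nonneg _
  push_cast at h2' ⊢
  linarith

end AJProof

theorem aJ_le_aJweak {V : Type*} (G : SimpleGraph V) [Fintype V]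
    [DecidableEq V] [DecidableRel G.Adj] (j : ℕ) (hj : 1 ≤ j) :
    DSI.aJ G j ≤ DSI.aJweak G j := by
  classical
  have hA_ne : {k | k ≤ Fintype.card V ∧
      (DSI.sumSmallest G k : ℤ) + DSI.fU G j ≤ (DSI.esize G : ℤ)}.Nonempty :=
    ⟨DSI.alphaJ G j, AJProof.alphaJ_mem_aJset G j⟩
  have hA_bdd : BddAbove {k | k ≤ Fintype.card V ∧
      (DSI.sumSmallest G k : ℤ) + DSI.fU G j ≤ (DSI.esize G : ℤ)} :=
    ⟨Fintype.card V, fun k hk => hk.1⟩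
  have hk : DSI.aJ G j ∈ {k | k ≤ Fintype.card V ∧
      (DSI.sumSmallest G k : ℤ) + DSI.fU G j ≤ (DSI.esize G : ℤ)} :=
    Nat.sSup_mem hA_ne hA_bdd
  obtain ⟨hk1, hk2⟩ := hk
  have hαk : DSI.alphaJ G j ≤ DSI.aJ G j := le_csSup hA_bdd (AJProof.alphaJ_mem_aJset G j)
  unfold DSI.aJweak
  refine le_csSup ⟨Fintype.card V, fun x hx => hx.1⟩ ⟨hk1, ?_⟩
  have hj' : (1 : ℚ) ≤ (j : ℚ) := by exact_mod_cast hj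
  have hk2' : (DSI.sumSmallest G (DSI.aJ G j) : ℚ) + (DSI.fU G j : ℚ) ≤ (DSI.esize G : ℚ) := by
    exact_mod_cast hk2
  have hfUZ := AJProof.fU_lower G hj
  have hfU' : -(((DSI.alphaJ G j * (j - 1) : ℕ)) : ℚ) ≤ 2 * (DSI.fU G j : ℚ) := by
    exact_mod_cast hfUZ
  have hcast : (((DSI.alphaJ G j * (j - 1) : ℕ)) : ℚ)
      = (DSI.alphaJ G j : ℚ) * ((j : ℚ) - 1) := by
    rw [Nat.cast_mul, Nat.cast_sub hj, Nat.cast_one]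
  rw [hcast] at hfU'
  have hαk' : (DSI.alphaJ G j : ℚ) ≤ (DSI.aJ G j : ℚ) := by exact_mod_cast hαk
  have hmul : (DSI.alphaJ G j : ℚ) * ((j : ℚ) - 1) ≤ (DSI.aJ G j : ℚ) * ((j : ℚ) - 1) :=
    mul_le_mul_of_nonneg_right hαk' (by linarith)
  linarith
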